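/- Let g be a square-integrable random vector in ℝⁿ with E[g] = μ, and let e be a random vector in ℝⁿ, independent of g, with i.i.d. coordinates uniform on [-Δ/2, Δ/2]. Define g̃ = g + ‖g‖_∞ · e. Then E[‖g̃ − μ‖₂²] ≤ (nΔ²/12)·E[‖g‖₂²] + E[‖g − μ‖₂²]. -/

import Mathlib

open MeasureTheory ProbabilityTheory

/-- The uniform probability distribution on the interval `[a, b]`. -/
noncomputable def uniformIcc (a b : ℝ) : Measure ℝ := volume[|Set.Icc a b]

lemma l2_mul_integrable {α} [MeasurableSpace α] {μ : Measure α} {f g : α → ℝ}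
    (hf : MemLp f 2 μ) (hg : MemLp g 2 μ) : Integrable (fun x => f x * g x) μ := by
  refine Integrable.mono' ((hf.integrable_sq.add hg.integrable_sq).div_const 2)
    (hf.aestronglyMeasurable.mul hg.aestronglyMeasurable) (Filter.Eventually.of_forall fun x => ?_)
  have := sq_nonneg (|f x| - |g x|)
  rw [Real.norm_eq_abs, abs_mul]
  simp only [Pi.add_apply]
  nlinarith [sq_abs (f x), sq_abs (g x), abs_nonneg (f x), abs_nonneg (g x)]

lemma uniform_int_id (a : ℝ) (ha : 0 < a) : ∫ x, x ∂(uniformIcc (-a) a) = 0 := by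
  rw [uniformIcc, ProbabilityTheory.cond, integral_smul_measure, integral_Icc_eq_integral_Ioc,
    ← intervalIntegral.integral_of_le (by linarith : (-a) ≤ a), integral_id]
  simp

lemma uniform_int_sq (a : ℝ) (ha : 0 < a) : ∫ x, x ^ 2 ∂(uniformIcc (-a) a) = a ^ 2 / 3 := by
  rw [uniformIcc, ProbabilityTheory.cond, integral_smul_measure, integral_Icc_eq_integral_Ioc,
    ← intervalIntegral.integral_of_le (by linarith : (-a) ≤ a), integral_pow, Real.volume_Icc]
  rw [← ENNReal.ofReal_inv_of_pos (by linarith),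
    ENNReal.toReal_ofReal (le_of_lt (by rw [inv_pos]; linarith)), smul_eq_mul]
  field_simp
  ring

theorem dqsg_variance_bound
    {Ω : Type*} [MeasurableSpace Ω] (P : Measure Ω) [IsProbabilityMeasure P]
    (n : ℕ) (Δ : ℝ) (hΔ : 0 < Δ)
    (g e : Ω → (Fin n → ℝ)) (hg : Measurable g) (he : Measurable e)
    (hgL2 : MemLp g 2 P)
    (μ : Fin n → ℝ) (hmean : (∫ ω, g ω ∂P) = μ)
    (hindep : IndepFun g e P)
    (heIndep : iIndepFun (fun i ω => e ω i) P)
    (heLaw : ∀ i, Measure.map (fun ω => e ω i) P = uniformIcc (-(Δ / 2)) (Δ / 2)) :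
    (∫ ω, ∑ i, (g ω i + ‖g ω‖ * e ω i - μ i) ^ 2 ∂P)
      ≤ n * Δ ^ 2 / 12 * (∫ ω, ∑ i, (g ω i) ^ 2 ∂P)
        + (∫ ω, ∑ i, (g ω i - μ i) ^ 2 ∂P) := by
  have hei : ∀ i, Measurable (fun ω => e ω i) := fun i => (measurable_pi_apply i).comp he
  -- moments of e
  have hEei : ∀ i, ∫ ω, e ω i ∂P = 0 := by
    intro i
    have h1 : ∫ ω, e ω i ∂P = ∫ x, x ∂(Measure.map (fun ω => e ω i) P) :=
      (integral_map (hei i).aemeasurable aestronglyMeasurable_id).symm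
    rw [h1, heLaw i]
    exact uniform_int_id _ (by linarith)
  have hEei2 : ∀ i, ∫ ω, (e ω i) ^ 2 ∂P = Δ ^ 2 / 12 := by
    intro i
    have h1 : ∫ ω, (e ω i) ^ 2 ∂P = ∫ x, x ^ 2 ∂(Measure.map (fun ω => e ω i) P) :=
      (integral_map (hei i).aemeasurable (measurable_id.pow_const 2).aestronglyMeasurable).symm
    rw [h1, heLaw i, uniform_int_sq _ (by linarith)]
    ring
  -- boundedness of e
  have hbd : ∀ i, ∀ᵐ ω ∂P, |e ω i| ≤ Δ / 2 := by
    intro i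
    have h1 : P ((fun ω => e ω i) ⁻¹' (Set.Icc (-(Δ / 2)) (Δ / 2))) = 1 := by
      rw [← Measure.map_apply (hei i) measurableSet_Icc, heLaw i, uniformIcc,
        ProbabilityTheory.cond_apply measurableSet_Icc, Set.inter_self, Real.volume_Icc]
      rw [ENNReal.inv_mul_cancel (by simp; linarith) (by simp)]
    have h2 : P ((fun ω => e ω i) ⁻¹' (Set.Icc (-(Δ / 2)) (Δ / 2)))ᶜ = 0 := by
      rw [measure_compl ((hei i) measurableSet_Icc) (measure_ne_top _ _), h1]
      simp
    rw [ae_iff]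
    convert h2 using 2
    ext ω
    simp [abs_le, Set.mem_Icc]
  -- L2 facts
  have hgiL2 : ∀ i, MemLp (fun ω => g ω i) 2 P := fun i =>
    hgL2.of_le ((measurable_pi_apply i).comp hg).aestronglyMeasurable
      (Filter.Eventually.of_forall fun ω => norm_le_pi_norm (g ω) i)
  have hnormL2 : MemLp (fun ω => ‖g ω‖) 2 P := hgL2.norm
  have hdiffL2 : ∀ i, MemLp (fun ω => g ω i - μ i) 2 P := fun i =>
    (hgiL2 i).sub (memLp_const _)
  have hprodInt : ∀ i, Integrable (fun ω => (g ω i - μ i) * ‖g ω‖) P := fun i =>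
    l2_mul_integrable (hdiffL2 i) hnormL2
  have hBint : ∀ i, Integrable (fun ω => e ω i * ((g ω i - μ i) * ‖g ω‖)) P := fun i =>
    Integrable.bdd_mul (hprodInt i) (hei i).aestronglyMeasurable
      (by filter_upwards [hbd i] with ω h using by rwa [Real.norm_eq_abs])
  have hCint : ∀ i, Integrable (fun ω => (e ω i) ^ 2 * ‖g ω‖ ^ 2) P := fun i =>
    Integrable.bdd_mul hnormL2.integrable_sq ((hei i).pow_const 2).aestronglyMeasurable
      (by
        filter_upwards [hbd i] with ω h
        rw [Real.norm_eq_abs, abs_pow, sq_abs, ← sq_abs (e ω i)]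
        exact pow_le_pow_left₀ (abs_nonneg _) h 2 : ∀ᵐ ω ∂P, ‖(e ω i) ^ 2‖ ≤ (Δ / 2) ^ 2)
  -- cross terms vanish
  have hnormMeas : Measurable fun x : Fin n → ℝ => ‖x‖ := measurable_norm
  have hcross : ∀ i, ∫ ω, e ω i * ((g ω i - μ i) * ‖g ω‖) ∂P = 0 := by
    intro i
    have hψ : Measurable fun x : Fin n → ℝ => (x i - μ i) * ‖x‖ :=
      ((measurable_pi_apply i).sub measurable_const).mul hnormMeas
    have hInd : IndepFun (fun ω => e ω i) (fun ω => (g ω i - μ i) * ‖g ω‖) P :=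
      hindep.symm.comp (measurable_pi_apply i) hψ
    have := hInd.integral_mul_eq_mul_integral ((hei i).aestronglyMeasurable)
      (hψ.comp hg).aestronglyMeasurable
    simp only [Pi.mul_apply] at this
    rw [show (fun ω => e ω i * ((g ω i - μ i) * ‖g ω‖)) =
        (fun ω => e ω i) * (fun ω => (g ω i - μ i) * ‖g ω‖) from rfl]
    exact this.trans (by rw [hEei i, zero_mul])
  -- second-moment term
  have hCval : ∀ i, ∫ ω, (e ω i) ^ 2 * ‖g ω‖ ^ 2 ∂P = Δ ^ 2 / 12 * ∫ ω, ‖g ω‖ ^ 2 ∂P := by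
    intro i
    have hψ : Measurable fun x : Fin n → ℝ => ‖x‖ ^ 2 := hnormMeas.pow_const 2
    have hInd : IndepFun (fun ω => (e ω i) ^ 2) (fun ω => ‖g ω‖ ^ 2) P :=
      hindep.symm.comp ((measurable_pi_apply i).pow_const 2) hψ
    have := hInd.integral_mul_eq_mul_integral ((hei i).pow_const 2).aestronglyMeasurable
      (hψ.comp hg).aestronglyMeasurable
    rw [show (fun ω => (e ω i) ^ 2 * ‖g ω‖ ^ 2) =
        (fun ω => (e ω i) ^ 2) * (fun ω => ‖g ω‖ ^ 2) from rfl]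
    rw [this, hEei2 i]
  -- pointwise expansion
  have hexp : ∀ ω, ∑ i, (g ω i + ‖g ω‖ * e ω i - μ i) ^ 2
      = (∑ i, (g ω i - μ i) ^ 2)
        + ((∑ i, 2 * (e ω i * ((g ω i - μ i) * ‖g ω‖)))
          + ∑ i, (e ω i) ^ 2 * ‖g ω‖ ^ 2) := by
    intro ω
    rw [← Finset.sum_add_distrib, ← Finset.sum_add_distrib]
    exact Finset.sum_congr rfl fun i _ => by ring
  have hA : Integrable (fun ω => ∑ i, (g ω i - μ i) ^ 2) P :=
    integrable_finset_sum _ fun i _ => (hdiffL2 i).integrable_sq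
  have hB : Integrable (fun ω => ∑ i, 2 * (e ω i * ((g ω i - μ i) * ‖g ω‖))) P :=
    integrable_finset_sum _ fun i _ => (hBint i).const_mul 2
  have hC : Integrable (fun ω => ∑ i, (e ω i) ^ 2 * ‖g ω‖ ^ 2) P :=
    integrable_finset_sum _ fun i _ => hCint i
  have hsplit : (∫ ω, ∑ i, (g ω i + ‖g ω‖ * e ω i - μ i) ^ 2 ∂P)
      = (∫ ω, ∑ i, (g ω i - μ i) ^ 2 ∂P)
        + ((∫ ω, ∑ i, 2 * (e ω i * ((g ω i - μ i) * ‖g ω‖)) ∂P)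
          + ∫ ω, ∑ i, (e ω i) ^ 2 * ‖g ω‖ ^ 2 ∂P) := by
    calc (∫ ω, ∑ i, (g ω i + ‖g ω‖ * e ω i - μ i) ^ 2 ∂P)
        = ∫ ω, (∑ i, (g ω i - μ i) ^ 2)
            + ((∑ i, 2 * (e ω i * ((g ω i - μ i) * ‖g ω‖)))
              + ∑ i, (e ω i) ^ 2 * ‖g ω‖ ^ 2) ∂P := by simp_rw [hexp]
      _ = (∫ ω, ∑ i, (g ω i - μ i) ^ 2 ∂P)
            + ∫ ω, (∑ i, 2 * (e ω i * ((g ω i - μ i) * ‖g ω‖)))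
              + ∑ i, (e ω i) ^ 2 * ‖g ω‖ ^ 2 ∂P := integral_add hA (hB.add hC)
      _ = (∫ ω, ∑ i, (g ω i - μ i) ^ 2 ∂P)
            + ((∫ ω, ∑ i, 2 * (e ω i * ((g ω i - μ i) * ‖g ω‖)) ∂P)
              + ∫ ω, ∑ i, (e ω i) ^ 2 * ‖g ω‖ ^ 2 ∂P) :=
          congrArg _ (integral_add hB hC)
  have hBval : (∫ ω, ∑ i, 2 * (e ω i * ((g ω i - μ i) * ‖g ω‖)) ∂P) = 0 := by
    rw [integral_finset_sum _ fun i _ => (hBint i).const_mul 2]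
    simp_rw [integral_const_mul]
    simp [hcross]
  have hCsum : (∫ ω, ∑ i, (e ω i) ^ 2 * ‖g ω‖ ^ 2 ∂P)
      = n * (Δ ^ 2 / 12 * ∫ ω, ‖g ω‖ ^ 2 ∂P) := by
    rw [integral_finset_sum _ fun i _ => hCint i]
    simp_rw [hCval]
    rw [Finset.sum_const, Finset.card_univ, Fintype.card_fin, nsmul_eq_mul]
  -- compare sup-norm square with euclidean square
  have hnormsq_le : (∫ ω, ‖g ω‖ ^ 2 ∂P) ≤ ∫ ω, ∑ i, (g ω i) ^ 2 ∂P := by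
    refine integral_mono hnormL2.integrable_sq
      (integrable_finset_sum _ fun i _ => (hgiL2 i).integrable_sq) fun ω => ?_
    have hs : (0:ℝ) ≤ ∑ i, (g ω i) ^ 2 := Finset.sum_nonneg fun i _ => sq_nonneg _
    have h1 : ‖g ω‖ ≤ Real.sqrt (∑ i, (g ω i) ^ 2) := by
      rw [pi_norm_le_iff_of_nonneg (Real.sqrt_nonneg _)]
      intro i
      rw [Real.norm_eq_abs, ← Real.sqrt_sq_eq_abs]
      exact Real.sqrt_le_sqrt (Finset.single_le_sum (fun j _ => sq_nonneg (g ω j))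
        (Finset.mem_univ i))
    have h2 := Real.sq_sqrt hs
    nlinarith [norm_nonneg (g ω), Real.sqrt_nonneg (∑ i, (g ω i) ^ 2)]
  have hcoef : (0:ℝ) ≤ (n : ℝ) * (Δ ^ 2 / 12) := by positivity
  have : (n : ℝ) * (Δ ^ 2 / 12 * ∫ ω, ‖g ω‖ ^ 2 ∂P)
      ≤ n * Δ ^ 2 / 12 * ∫ ω, ∑ i, (g ω i) ^ 2 ∂P := by
    rw [← mul_assoc]
    calc (n : ℝ) * (Δ ^ 2 / 12) * ∫ ω, ‖g ω‖ ^ 2 ∂P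
        ≤ (n : ℝ) * (Δ ^ 2 / 12) * ∫ ω, ∑ i, (g ω i) ^ 2 ∂P :=
          mul_le_mul_of_nonneg_left hnormsq_le hcoef
      _ = n * Δ ^ 2 / 12 * ∫ ω, ∑ i, (g ω i) ^ 2 ∂P := by ring
  rw [hsplit, hBval, hCsum]
  linarith
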